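/- Let κ be an infinite cardinal, λ an infinite cardinal, and α an ordinal. If NPr⁰_α(λ; κ) holds (i.e., some model with universe λ and vocabulary of cardinality ≤ κ has rk⁰(M; <κ⁺) < α), then NPr⁰_{α+1}(λ⁺; κ) holds (some model with universe λ⁺ and vocabulary of cardinality ≤ κ has rk⁰(M; <κ⁺) < α + 1). -/

import Mathlib

open FirstOrder Cardinal

universe u

namespace Sh522

/-- `a ∈ clLt L M κ B` iff `a` is in the `<κ`-closure of `B` in `M`:
for some quantifier-free formula `φ(y, x₁, …, xₙ)` and parameters `b` from `B`,
`M ⊨ φ[a, b]` and the set of solutions of `φ(−, b)` has cardinality `< κ`. -/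
def clLt (L : FirstOrder.Language.{u, u}) (M : Type u) [L.Structure M]
    (κ : Cardinal.{u}) (B : Set M) : Set M :=
  {a | ∃ (n : ℕ) (φ : L.Formula (Fin (n + 1))),
      FirstOrder.Language.BoundedFormula.IsQF φ ∧
      ∃ b : Fin n → M, (∀ i, b i ∈ B) ∧
        φ.Realize (Fin.cons a b) ∧
        Cardinal.mk {x : M // φ.Realize (Fin.cons x b)} < κ}

/-- `rk^l(w, M; <κ) ≥ 0`. -/
def rkBase (L : FirstOrder.Language.{u, u}) (M : Type u) [L.Structure M]
    (κ : Cardinal.{u}) (w : Set M) : Prop :=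
  w.Finite ∧ w.Nonempty ∧ ∀ a ∈ w, a ∉ clLt L M κ (w \ {a})

/-- The successor step of the rank: `rk^l(w, M; <κ) ≥ β + 1` where `P` is
`rk^l(−, M; <κ) ≥ β`. -/
def rkStep (L : FirstOrder.Language.{u, u}) (M : Type u) [L.Structure M]
    (l : ℕ) (κ : Cardinal.{u}) (P : Set M → Prop) (w : Set M) : Prop :=
  w.Finite ∧ w.Nonempty ∧
  ∀ (n : ℕ) (a : Fin n → M), Function.Injective a → Set.range a = w →
    ∀ (k : Fin n) (φ : L.Formula (Fin n)),
      FirstOrder.Language.BoundedFormula.IsQF φ → φ.Realize a →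
      ∃ b : Fin 2 → Fin n → M,
        P (Set.range fun p : Fin 2 × Fin n => b p.1 p.2) ∧
        (∀ i : Fin 2, φ.Realize (b i)) ∧
        b 0 k ≠ b 1 k ∧
        (∀ m : Fin n, m ≠ k → b 0 m = b 1 m) ∧
        (l = 0 → ∀ m : Fin n, b 0 m = a m)

/-- `rkGe L M l κ α w` says `rk^l(w, M; <κ) ≥ α`. -/
noncomputable def rkGe (L : FirstOrder.Language.{u, u}) (M : Type u) [L.Structure M]
    (l : ℕ) (κ : Cardinal.{u}) (α : Ordinal.{u}) : Set M → Prop :=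
  Ordinal.limitRecOn (motive := fun _ => Set M → Prop) α
    (rkBase L M κ)
    (fun _ ih => rkStep L M l κ ih)
    (fun o _ ih w => ∀ (β : Ordinal.{u}) (h : β < o), ih β h w)

/-- `Pr l α lam bound θ` is `Pr^l_α(lam; <bound, θ)`: every model with universe of
cardinality `lam` and vocabulary of cardinality `≤ θ` has `rk^l(M; <bound) ≥ α`,
where `rk^l(M; <bound) = sup { rk^l(w, M; <bound) + 1 : w ∈ [M]* }`. -/
def Pr (l : ℕ) (α : Ordinal.{u}) (lam bound θ : Cardinal.{u}) : Prop :=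
  ∀ (L : FirstOrder.Language.{u, u}) (M : Type u) (S : L.Structure M),
    Cardinal.mk M = lam → L.card ≤ θ →
    ∀ β < α, ∃ w : Set M, w.Finite ∧ w.Nonempty ∧ @rkGe L M S l bound β w
universe v u' v'

-- ######## auxiliary development ########

theorem rkGe_zero (L : FirstOrder.Language.{u, u}) (M : Type u) [L.Structure M]
    (l : ℕ) (κ : Cardinal.{u}) : rkGe L M l κ 0 = rkBase L M κ :=
  Ordinal.limitRecOn_zero _ _ _

theorem rkGe_succ (L : FirstOrder.Language.{u, u}) (M : Type u) [L.Structure M]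
    (l : ℕ) (κ : Cardinal.{u}) (β : Ordinal.{u}) :
    rkGe L M l κ (Order.succ β) = rkStep L M l κ (rkGe L M l κ β) :=
  Ordinal.limitRecOn_succ _ _ _ _

theorem rkGe_limit (L : FirstOrder.Language.{u, u}) (M : Type u) [L.Structure M]
    (l : ℕ) (κ : Cardinal.{u}) (o : Ordinal.{u}) (h : Order.IsSuccLimit o) :
    rkGe L M l κ o = fun w => ∀ β (_ : β < o), rkGe L M l κ β w :=
  Ordinal.limitRecOn_limit _ _ _ _ h

section Build

variable (L₀ : FirstOrder.Language.{u, u}) (M₀ : Type u) [S₀ : L₀.Structure M₀]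

/-- The language on the bigger model: a relation of arity `n+1` for each
`L₀`-formula in `n` variables. -/
def Lc : FirstOrder.Language.{u, u} where
  Functions := fun _ => PEmpty
  Relations := fun m => match m with
    | 0 => PEmpty
    | n + 1 => L₀.Formula (Fin n)

variable (N : Type u) [LinearOrder N] (H : N → N → M₀)

/-- The structure on the bigger model. -/
def cstr : (Lc L₀).Structure N where
  funMap := fun {_} f _ => f.elim
  RelMap := fun {n} r v =>
    match n, r, v with
    | 0, r, _ => r.elim
    | m + 1, ψ, v =>
      (∀ i : Fin m, v i.succ < v 0) ∧ ψ.Realize (fun i => H (v i.succ) (v 0))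


/-- atomic relation formula with substitution of variables -/
def relForm {t m : ℕ} (ψ : L₀.Formula (Fin m)) (σ : Fin (m + 1) → Fin t) :
    (Lc L₀).Formula (Fin t) :=
  FirstOrder.Language.Relations.formula (L := Lc L₀) (n := m + 1) ψ
    (fun j => FirstOrder.Language.Term.var (σ j))

theorem relForm_isQF {t m : ℕ} (ψ : L₀.Formula (Fin m)) (σ : Fin (m + 1) → Fin t) :
    (relForm L₀ ψ σ).IsQF :=
  (Language.BoundedFormula.IsAtomic.rel _ _).isQF

theorem realize_relForm {t m : ℕ} (ψ : L₀.Formula (Fin m)) (σ : Fin (m + 1) → Fin t)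
    (v : Fin t → N) :
    @Language.Formula.Realize (Lc L₀) N (cstr L₀ M₀ N H) (Fin t) (relForm L₀ ψ σ) v ↔
      (∀ i : Fin m, v (σ i.succ) < v (σ 0)) ∧
        ψ.Realize (fun i => H (v (σ i.succ)) (v (σ 0))) :=
  Iff.rfl

theorem transfer (hH : ∀ y : N, Set.InjOn (fun x => H x y) (Set.Iio y))
    (κ' : Cardinal.{u}) (β : Ordinal.{u}) :
    ∀ (u : Set N) (y : N), y ∈ u → (∀ x ∈ u, x ≠ y → x < y) → (u \ {y}).Nonempty →
      @rkGe (Lc L₀) N (cstr L₀ M₀ N H) 0 κ' β u →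
      rkGe L₀ M₀ 0 κ' β ((fun x => H x y) '' (u \ {y})) := by
  induction β using Ordinal.limitRecOn with
  | zero =>
    intro u y hy hmax hne hrk
    rw [rkGe_zero] at hrk
    rw [rkGe_zero]
    obtain ⟨hfin, -, hcl⟩ := hrk
    refine ⟨(hfin.diff).image _, hne.image _, ?_⟩
    rintro a' ⟨a, ha, rfl⟩ hmem
    obtain ⟨m, ψ, hψQF, b', hb', hreal, hsmall⟩ := hmem
    have hay : a < y := hmax a ha.1 ha.2
    have hpre : ∀ i : Fin m, ∃ x, (x ∈ u \ {y}) ∧ H x y = b' i ∧ x ≠ a := by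
      intro i
      obtain ⟨⟨x, hx, hHx⟩, hne'⟩ := hb' i
      refine ⟨x, hx, hHx, ?_⟩
      rintro rfl
      exact hne' (by rw [hHx] ; exact rfl)
    choose xs hxs hHxs hxsa using hpre
    have hxslt : ∀ i, xs i < y := fun i => hmax _ (hxs i).1 (hxs i).2
    set σ : Fin (m + 2) → Fin (m + 2) :=
      Fin.cons 1 (Fin.cons 0 (fun i : Fin m => i.succ.succ)) with hσ
    set vr : Fin (m + 1) → N := Fin.cons y xs with hvr
    have hiff : ∀ z : N,
        @Language.Formula.Realize (Lc L₀) N (cstr L₀ M₀ N H) (Fin (m + 2))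
            (relForm L₀ ψ σ) (Fin.cons z vr) ↔
          ((z < y ∧ ∀ j : Fin m, xs j < y) ∧ ψ.Realize (Fin.cons (H z y) b')) := by
      intro z
      rw [realize_relForm]
      have h0 : (Fin.cons z vr : Fin (m + 2) → N) (σ 0) = y := by
        simp [hσ, hvr]
      have hsv : ∀ i : Fin (m + 1),
          (Fin.cons z vr : Fin (m + 2) → N) (σ i.succ) =
            (Fin.cons z xs : Fin (m + 1) → N) i := by
        intro i
        refine Fin.cases ?_ (fun j => ?_) i <;> simp [hσ, hvr]
      have hfun : (fun i : Fin (m + 1) => H ((Fin.cons z xs : Fin (m + 1) → N) i) y) =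
          Fin.cons (H z y) b' := by
        funext i
        refine Fin.cases ?_ (fun j => ?_) i <;> simp [hHxs]
      simp only [h0, hsv, hfun]
      simp [Fin.forall_fin_succ]
    refine hcl a ha.1 ⟨m + 1, relForm L₀ ψ σ, relForm_isQF L₀ ψ σ, vr, ?_, ?_, ?_⟩
    · intro i
      refine Fin.cases ?_ (fun j => ?_) i
      · rw [hvr]
        refine ⟨hy, fun hh => ?_⟩
        rw [Fin.cons_zero] at hh
        exact ha.2 (Set.mem_singleton_iff.2 (Set.mem_singleton_iff.1 hh).symm)
      · rw [hvr]
        rw [Fin.cons_succ]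
        exact ⟨(hxs j).1, fun hh => hxsa j (Set.mem_singleton_iff.1 hh)⟩
    · rw [hiff a]
      exact ⟨⟨hay, hxslt⟩, hreal⟩
    · have hinj2 : Function.Injective
          (fun z : {x : N // @Language.Formula.Realize (Lc L₀) N (cstr L₀ M₀ N H) _
              (relForm L₀ ψ σ) (Fin.cons x vr)} =>
            (⟨H z.1 y, ((hiff z.1).1 z.2).2⟩ :
              {x : M₀ // ψ.Realize (Fin.cons x b')})) := by
        intro z₁ z₂ hz
        have h₁ := ((hiff z₁.1).1 z₁.2).1.1
        have h₂ := ((hiff z₂.1).1 z₂.2).1.1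
        exact Subtype.ext (hH y h₁ h₂ (congrArg Subtype.val hz))
      exact lt_of_le_of_lt (Cardinal.mk_le_of_injective hinj2) hsmall
  | add_one β ih =>
    intro u y hy hmax hne hrk
    rw [Ordinal.add_one_eq_succ] at hrk ⊢
    rw [rkGe_succ] at hrk
    rw [rkGe_succ]
    obtain ⟨hfin, -, hstep⟩ := hrk
    refine ⟨(hfin.diff).image _, hne.image _, ?_⟩
    intro m a' hinj' hrng' k ψ hQF hreal
    have hpre : ∀ i : Fin m, ∃ x, x ∈ u \ {y} ∧ H x y = a' i := by
      intro i
      have hmm : a' i ∈ Set.range a' := Set.mem_range_self i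
      rw [hrng'] at hmm
      obtain ⟨x, hx, hHx⟩ := hmm
      exact ⟨x, hx, hHx⟩
    choose xs hxs hHxs using hpre
    have hxslt : ∀ i, xs i < y := fun i => hmax _ (hxs i).1 (hxs i).2
    have hxsinj : Function.Injective xs := by
      intro i j hij
      apply hinj'
      rw [← hHxs i, ← hHxs j, hij]
    set aa : Fin (m + 1) → N := Fin.cons y xs with haa
    have haa0 : aa 0 = y := by rw [haa, Fin.cons_zero]
    have haas : ∀ i : Fin m, aa i.succ = xs i := fun i => by rw [haa, Fin.cons_succ]
    have haainj : Function.Injective aa := by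
      rw [haa, Fin.cons_injective_iff]
      refine ⟨?_, hxsinj⟩
      rintro ⟨i, hi⟩
      exact absurd hi (ne_of_lt (hxslt i))
    have haarng : Set.range aa = u := by
      rw [haa, Fin.range_cons]
      apply Set.eq_of_subset_of_subset
      · rintro z (rfl | ⟨i, rfl⟩)
        · exact hy
        · exact (hxs _).1
      · intro z hz
        rcases eq_or_ne z y with rfl | hzy
        · exact Set.mem_insert _ _
        · have hz' : H z y ∈ Set.range a' := by
            rw [hrng']
            exact ⟨z, ⟨hz, hzy⟩, rfl⟩
          obtain ⟨i, hi⟩ := hz'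
          have hzx : z = xs i := by
            apply hH y (hmax z hz hzy) (hxslt i)
            rw [← hHxs i] at hi
            exact hi.symm
          exact Set.mem_insert_iff.2 (Or.inr ⟨i, hzx.symm⟩)
    have hreal₀ : @Language.Formula.Realize (Lc L₀) N (cstr L₀ M₀ N H) (Fin (m + 1))
        (relForm L₀ ψ (fun j => j)) aa := by
      rw [realize_relForm]
      constructor
      · intro i
        rw [haa0, haas]
        exact hxslt i
      · have hfn : (fun i : Fin m => H (aa i.succ) (aa 0)) = a' := by
          funext i
          rw [haa0, haas, hHxs]
        rw [hfn]
        exact hreal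
    obtain ⟨bb, hP, hrealb, hne01, hagree, hl0⟩ :=
      hstep (m + 1) aa haainj haarng k.succ (relForm L₀ ψ (fun j => j))
        (relForm_isQF L₀ ψ _) hreal₀
    have hb0 : ∀ i, bb 0 i = aa i := hl0 rfl
    have hb10 : bb 1 0 = y := by
      rw [← hagree 0 (Fin.succ_ne_zero k).symm, hb0, haa0]
    have hr1 := hrealb 1
    rw [realize_relForm] at hr1
    rw [hb10] at hr1
    obtain ⟨hlt1, hψ1⟩ := hr1
    set u₂ := Set.range (fun p : Fin 2 × Fin (m + 1) => bb p.1 p.2) with hu₂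
    have hu₂y : y ∈ u₂ := ⟨(0, 0), by show bb 0 0 = y; rw [hb0, haa0]⟩
    have hlt : ∀ j : Fin 2, ∀ i : Fin m, bb j i.succ < y := by
      intro j i
      obtain rfl | rfl : j = 0 ∨ j = 1 := by omega
      · rw [hb0, haas]
        exact hxslt i
      · exact hlt1 i
    have hzero : ∀ j : Fin 2, bb j 0 = y := by
      intro j
      obtain rfl | rfl : j = 0 ∨ j = 1 := by omega
      · rw [hb0, haa0]
      · exact hb10
    have hmax₂ : ∀ z ∈ u₂, z ≠ y → z < y := by
      rintro z ⟨⟨j, i⟩, rfl⟩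
      show bb j i ≠ y → bb j i < y
      refine Fin.cases (fun h => absurd (hzero j) h) (fun i' _ => hlt j i') i
    have hne₂ : (u₂ \ {y}).Nonempty := by
      refine ⟨bb 0 k.succ, ⟨(0, k.succ), rfl⟩, ?_⟩
      rw [hb0, haas]
      exact fun hh => absurd (Set.mem_singleton_iff.1 hh) (ne_of_lt (hxslt k))
    have hIH := ih u₂ y hu₂y hmax₂ hne₂ hP
    refine ⟨fun j i => H (bb j i.succ) y, ?_, ?_, ?_, ?_, ?_⟩
    · have hrng2 : (Set.range fun p : Fin 2 × Fin m => H (bb p.1 p.2.succ) y) =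
          (fun x => H x y) '' (u₂ \ {y}) := by
        apply Set.eq_of_subset_of_subset
        · rintro z ⟨⟨j, i⟩, rfl⟩
          exact ⟨bb j i.succ, ⟨⟨(j, i.succ), rfl⟩,
            fun hh => absurd (Set.mem_singleton_iff.1 hh) (ne_of_lt (hlt j i))⟩, rfl⟩
        · rintro z ⟨x, ⟨⟨⟨j, i⟩, rfl⟩, hxy⟩, rfl⟩
          have hi0 : i ≠ 0 := by
            rintro rfl
            exact hxy (Set.mem_singleton_iff.2 (hzero j))
          obtain ⟨i', rfl⟩ := Fin.eq_succ_of_ne_zero hi0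
          exact ⟨(j, i'), rfl⟩
      rw [hrng2]
      exact hIH
    · intro j
      obtain rfl | rfl : j = 0 ∨ j = 1 := by omega
      · have hfn : (fun i : Fin m => H (bb 0 i.succ) y) = a' := by
          funext i
          rw [hb0, haas, hHxs]
        show ψ.Realize (fun i : Fin m => H (bb 0 i.succ) y)
        rw [hfn]
        exact hreal
      · exact hψ1
    · intro hEq
      apply hne01
      have h1 : bb 0 k.succ < y := by
        rw [hb0, haas]
        exact hxslt k
      exact hH y h1 (hlt1 k) hEq
    · intro m' hm'
      show H (bb 0 m'.succ) y = H (bb 1 m'.succ) y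
      rw [hagree m'.succ (fun hh => hm' (Fin.succ_injective _ hh))]
    · intro _ m'
      show H (bb 0 m'.succ) y = a' m'
      rw [hb0, haas, hHxs]
  | limit o ho ih =>
    intro u y hy hmax hne hrk
    rw [@rkGe_limit (Lc L₀) N (cstr L₀ M₀ N H) 0 κ' o ho] at hrk
    rw [rkGe_limit L₀ M₀ 0 κ' o ho]
    intro β hβ
    exact ih β hβ u y hy hmax hne (hrk β hβ)

theorem realize_ltForm {t : ℕ} (kk mm : Fin t) (v : Fin t → N) :
    @Language.Formula.Realize (Lc L₀) N (cstr L₀ M₀ N H) (Fin t)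
      (relForm L₀ (⊤ : L₀.Formula (Fin 1)) (Fin.cons kk (fun _ => mm))) v ↔
      v mm < v kk := by
  rw [realize_relForm]
  constructor
  · rintro ⟨h1, -⟩
    have := h1 0
    simpa using this
  · intro hlt
    constructor
    · intro i
      have hi : (i : Fin 1) = 0 := Subsingleton.elim _ _
      rw [hi]
      simpa using hlt
    · simp

theorem Lc_card_le (κ : Cardinal.{u}) (hκ : ℵ₀ ≤ κ) (hL₀ : L₀.card ≤ κ) :
    (Lc L₀).card ≤ κ := by
  have hrel : ∀ l : ℕ, #((Lc L₀).Relations l) ≤ κ := by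
    intro l
    match l with
    | 0 =>
      have : IsEmpty ((Lc L₀).Relations 0) := ⟨fun x => PEmpty.elim x⟩
      simp [Cardinal.mk_eq_zero]
    | n + 1 =>
      calc #(L₀.Formula (Fin n)) ≤ #(Σ k, L₀.BoundedFormula (Fin n) k) :=
            Cardinal.mk_le_of_injective (f := Sigma.mk 0) sigma_mk_injective
        _ ≤ max ℵ₀ (Cardinal.lift.{u} #(Fin n) + Cardinal.lift.{0} L₀.card) :=
            Language.BoundedFormula.card_le
        _ ≤ κ := by
            apply max_le hκ
            apply le_trans (add_le_add (le_of_lt ?_) ?_) (Cardinal.add_eq_self hκ).le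
            · rw [Cardinal.mk_fin, Cardinal.lift_natCast]
              exact Cardinal.nat_lt_aleph0 n |>.trans_le hκ
            · rw [Cardinal.lift_id']
              exact hL₀
  have hsig : #(Σ l : ℕ, (Lc L₀).Relations l) ≤ κ := by
    have he : (Σ l : ULift.{u} ℕ, (Lc L₀).Relations l.down) ≃
        (Σ l : ℕ, (Lc L₀).Relations l) :=
      Equiv.sigmaCongrLeft' (Equiv.ulift (α := ℕ))
    rw [← Cardinal.mk_congr he, Cardinal.mk_sigma]
    calc Cardinal.sum (fun l : ULift.{u} ℕ => #((Lc L₀).Relations l.down)) ≤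
        Cardinal.sum (fun _ : ULift.{u} ℕ => κ) :=
          Cardinal.sum_le_sum _ _ (fun l => hrel l.down)
      _ = #(ULift.{u} ℕ) * κ := Cardinal.sum_const' _ _
      _ = ℵ₀ * κ := by rw [Cardinal.mk_uLift, Cardinal.mk_nat, Cardinal.lift_aleph0]
      _ = κ := Cardinal.aleph0_mul_eq hκ
  have hfun : #(Σ l : ℕ, (Lc L₀).Functions l) = 0 := by
    have : IsEmpty (Σ l : ℕ, (Lc L₀).Functions l) := ⟨fun x => PEmpty.elim x.2⟩
    exact Cardinal.mk_eq_zero _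
  rw [Language.card, Language.Symbols, Cardinal.mk_sum, hfun]
  simp only [Cardinal.lift_id, Cardinal.lift_zero, zero_add]
  exact hsig

end Build

theorem isQF_foldr_inf {L : FirstOrder.Language.{u, v}} {α : Type u'} {n : ℕ} :
    ∀ l : List (L.BoundedFormula α n), (∀ φ ∈ l, φ.IsQF) →
      (l.foldr (· ⊓ ·) ⊤).IsQF
  | [], _ => Language.BoundedFormula.IsQF.top
  | φ :: l, h =>
    (h φ (by simp)).inf (isQF_foldr_inf l fun ψ hψ => h ψ (by simp [hψ]))

theorem isQF_iInf {L : FirstOrder.Language.{u, v}} {α : Type u'} {β : Type v'} {n : ℕ}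
    [Finite β] (f : β → L.BoundedFormula α n) (h : ∀ b, (f b).IsQF) :
    (Language.BoundedFormula.iInf f).IsQF := by
  unfold Language.BoundedFormula.iInf
  exact isQF_foldr_inf _ (by
    intro φ hφ
    simp only [List.mem_map] at hφ
    obtain ⟨b, _, rfl⟩ := hφ
    exact h b)


/-- if `NPr⁰_α(λ; κ)` then `NPr⁰_{α+1}(λ⁺; κ)`. -/
theorem stmt_4 (κ : Cardinal.{u}) (hκ : ℵ₀ ≤ κ)
    (lam : Cardinal.{u}) (hlam : ℵ₀ ≤ lam) (α : Ordinal.{u})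
    (h : ¬ Pr 0 α lam (Order.succ κ) κ) :
    ¬ Pr 0 (α + 1) (Order.succ lam) (Order.succ κ) κ := by
  intro hPr
  rw [Pr] at h
  push_neg at h
  obtain ⟨L₀, M₀, S₀, hmk, hcard, β₀, hβ₀, hno⟩ := h
  set N := (Order.succ lam).ord.ToType with hN
  have hmkN : #N = Order.succ lam := by
    rw [hN, Cardinal.mk_toType, Cardinal.card_ord]
  have hMne : Nonempty M₀ := by
    rw [← Cardinal.mk_ne_zero_iff, hmk]
    exact (Cardinal.aleph0_pos.trans_le hlam).ne'
  have hemb : ∀ y : N, Nonempty (Set.Iio y ↪ M₀) := by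
    intro y
    rw [← Cardinal.le_def, hmk]
    exact Order.lt_succ_iff.mp (Cardinal.mk_Iio_ord_toType y)
  set H : N → N → M₀ := fun x y =>
    if hxy : x < y then (hemb y).some ⟨x, hxy⟩ else Classical.choice hMne with hHdef
  have hH : ∀ y : N, Set.InjOn (fun x => H x y) (Set.Iio y) := by
    intro y x₁ h₁ x₂ h₂ hEq
    have h₁' : x₁ < y := h₁
    have h₂' : x₂ < y := h₂
    simp only [hHdef, dif_pos h₁', dif_pos h₂'] at hEq
    exact congrArg Subtype.val ((hemb y).some.injective hEq)
  obtain ⟨w, wfin, wne, hrk⟩ := hPr (Lc L₀) N (cstr L₀ M₀ N H) hmkN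
    (Lc_card_le L₀ κ hκ hcard) (β₀ + 1)
    (by
      rw [Ordinal.add_one_eq_succ, Ordinal.add_one_eq_succ]
      exact Order.succ_lt_succ_iff.mpr hβ₀)
  obtain ⟨n, f, hfrng⟩ := wfin.fin_embedding
  haveI hnpos : Nonempty (Fin n) := by
    obtain ⟨z, hz⟩ := wne
    rw [← hfrng] at hz
    obtain ⟨i, -⟩ := hz
    exact ⟨i⟩
  obtain ⟨k, hk⟩ := Finite.exists_max (fun i => f i)
  set φ : (Lc L₀).Formula (Fin n) := Language.BoundedFormula.iInf
    (fun m : ↥(Finset.univ.erase k) => relForm L₀ (⊤ : L₀.Formula (Fin 1))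
      (Fin.cons k (fun _ => (m : Fin n)))) with hφdef
  have hφiff : ∀ v : Fin n → N,
      @Language.Formula.Realize (Lc L₀) N (cstr L₀ M₀ N H) (Fin n) φ v ↔
        ∀ m ∈ Finset.univ.erase k, v m < v k := by
    intro v
    rw [hφdef]
    show @Language.BoundedFormula.Realize (Lc L₀) N (cstr L₀ M₀ N H) (Fin n) 0
        (Language.BoundedFormula.iInf
          (fun m : ↥(Finset.univ.erase k) => relForm L₀ (⊤ : L₀.Formula (Fin 1))
            (Fin.cons k (fun _ => (m : Fin n))))) v
          default ↔ _
    letI : (Lc L₀).Structure N := cstr L₀ M₀ N H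
    rw [Language.BoundedFormula.realize_iInf, Subtype.forall]
    apply forall_congr'
    intro m
    apply forall_congr'
    intro hm
    exact realize_ltForm L₀ M₀ N H k m v
  have hφQF : Language.BoundedFormula.IsQF φ := by
    rw [hφdef]
    refine isQF_iInf _ (fun m => ?_)
    exact relForm_isQF L₀ _ _
  have hφreal : @Language.Formula.Realize (Lc L₀) N (cstr L₀ M₀ N H) (Fin n) φ f := by
    rw [hφiff]
    intro m hm
    have hmk' : m ≠ k := Finset.ne_of_mem_erase hm
    exact lt_of_le_of_ne (hk m) (fun hh => hmk' (f.injective hh))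
  rw [Ordinal.add_one_eq_succ,
    @rkGe_succ (Lc L₀) N (cstr L₀ M₀ N H) 0 (Order.succ κ) β₀] at hrk
  obtain ⟨-, -, hstep⟩ := hrk
  obtain ⟨bb, hP, hrealb, hne01, hagree, hl0⟩ :=
    hstep n f f.injective hfrng k φ hφQF hφreal
  have hb0 : ∀ i, bb 0 i = f i := hl0 rfl
  set c := bb 1 k with hc
  have hcf : f k ≠ c := by
    rw [← hb0]
    exact hne01
  have hfm : ∀ m, m ≠ k → bb 1 m < c := by
    intro m hm
    have := (hφiff (bb 1)).mp (hrealb 1) m (Finset.mem_erase.2 ⟨hm, Finset.mem_univ m⟩)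
    exact this
  have hfk : ∀ m, m ≠ k → f m < f k := fun m hm =>
    lt_of_le_of_ne (hk m) (fun hh => hm (f.injective hh))
  set y := max (f k) c with hy
  set u₂ := Set.range (fun p : Fin 2 × Fin n => bb p.1 p.2) with hu₂
  have hyu : y ∈ u₂ := by
    rcases max_choice (f k) c with hh | hh
    · exact ⟨(0, k), by show bb 0 k = y; rw [hb0]; exact hh.symm⟩
    · exact ⟨(1, k), by show bb 1 k = y; exact hh.symm⟩
  have hmax₂ : ∀ z ∈ u₂, z ≠ y → z < y := by
    rintro z ⟨⟨j, i⟩, rfl⟩ hzy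
    have hle : bb j i ≤ y := by
      obtain rfl | rfl : j = 0 ∨ j = 1 := by omega
      · rw [hb0]
        rcases eq_or_ne i k with rfl | hik
        · exact le_max_left _ _
        · exact le_trans (hfk i hik).le (le_max_left _ _)
      · rcases eq_or_ne i k with rfl | hik
        · exact le_max_right _ _
        · rw [← hagree i hik, hb0]
          exact le_trans (hfk i hik).le (le_max_left _ _)
    exact lt_of_le_of_ne hle hzy
  have hne₂ : (u₂ \ {y}).Nonempty := by
    rcases max_choice (f k) c with hh | hh
    · refine ⟨c, ⟨(1, k), rfl⟩, ?_⟩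
      intro hmem
      rw [Set.mem_singleton_iff, hy, hh] at hmem
      exact hcf hmem.symm
    · refine ⟨f k, ⟨(0, k), by show bb 0 k = f k; rw [hb0]⟩, ?_⟩
      intro hmem
      rw [Set.mem_singleton_iff, hy, hh] at hmem
      exact hcf hmem
  have htr := transfer L₀ M₀ N H hH (Order.succ κ) β₀ u₂ y hyu hmax₂ hne₂ hP
  exact hno _ (((Set.finite_range _).diff).image _) (hne₂.image _) htr

end Sh522
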